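/- Let Ĝ be a finite group acting on a finite set X, let G be a subgroup of Ĝ, and let a ∈ Ĝ be an element that commutes with every element of G and such that Ĝ is generated by G together with a. Let r ≥ 1 be an integer dividing the order of a such that ⟨a⟩ ∩ G = ⟨a^r⟩. Suppose a acts trivially on X. Then for every integer d ≥ 0, χ^{(d)}(X; Ĝ) = r^d · χ^{(d)}(X; G), where G acts on X by restriction of the Ĝ-action. -/

import Mathlib

section
variable {Ghat : Type} [Group Ghat] [Finite Ghat] (a : Ghat)

open Subgroup

noncomputable def phiA : Multiplicative (ZMod (orderOf a)) →* Ghat where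
  toFun k := a ^ (Multiplicative.toAdd k).val
  map_one' := by simp [ZMod.val_zero]
  map_mul' x y := by
    have hn : orderOf a ≠ 0 := (orderOf_pos a).ne'
    have : NeZero (orderOf a) := ⟨hn⟩
    show a ^ (Multiplicative.toAdd x + Multiplicative.toAdd y).val =
      a ^ (Multiplicative.toAdd x).val * a ^ (Multiplicative.toAdd y).val
    rw [← pow_add]
    refine pow_eq_pow_iff_modEq.mpr ?_
    rw [ZMod.val_add]
    exact Nat.mod_modEq _ _

lemma phiA_injective : Function.Injective (phiA a) := by
  have hn : orderOf a ≠ 0 := (orderOf_pos a).ne'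
  have : NeZero (orderOf a) := ⟨hn⟩
  intro x y h
  have := pow_eq_pow_iff_modEq.mp (h : a ^ _ = a ^ _)
  have hx := (Multiplicative.toAdd x).val_lt
  have hy := (Multiplicative.toAdd y).val_lt
  have : (Multiplicative.toAdd x).val = (Multiplicative.toAdd y).val := by
    rwa [Nat.ModEq, Nat.mod_eq_of_lt hx, Nat.mod_eq_of_lt hy] at this
  have := ZMod.val_injective _ this
  exact Multiplicative.toAdd.injective this

lemma phiA_zpow (m : ℤ) : phiA a (Multiplicative.ofAdd (m : ZMod (orderOf a))) = a ^ m := by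
  have hn : orderOf a ≠ 0 := (orderOf_pos a).ne'
  have : NeZero (orderOf a) := ⟨hn⟩
  show a ^ ((m : ZMod (orderOf a))).val = a ^ m
  rw [← zpow_natCast]
  refine zpow_eq_zpow_iff_modEq.mpr ?_
  have h : ((((m : ZMod (orderOf a))).val : ℤ) : ZMod (orderOf a)) = ((m : ℤ) : ZMod (orderOf a)) := by
    push_cast
    rw [ZMod.natCast_val, ZMod.cast_id]
  exact (ZMod.intCast_eq_intCast_iff _ _ _).mp h

lemma phiA_mem_zpowers (k) : phiA a k ∈ zpowers a :=
  pow_mem (mem_zpowers a) _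

lemma phiA_surj_zpowers {z : Ghat} (hz : z ∈ zpowers a) : ∃ k, phiA a k = z := by
  obtain ⟨m, rfl⟩ := hz
  exact ⟨Multiplicative.ofAdd (m : ZMod (orderOf a)), phiA_zpow a m⟩

variable (G : Subgroup Ghat)

noncomputable def psiA (ha : ∀ x : Ghat, Commute a x) :
    G × Multiplicative (ZMod (orderOf a)) →* Ghat :=
  MonoidHom.noncommCoprod G.subtype (phiA a)
    (fun g k => ((ha (g : Ghat)).symm.pow_right _))

lemma psiA_apply (ha : ∀ x : Ghat, Commute a x) (p) :
    psiA a G ha p = (p.1 : Ghat) * phiA a p.2 := rfl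

lemma central_of_gen (hcomm : ∀ g ∈ G, a * g = g * a)
    (hgen : Subgroup.closure ((G : Set Ghat) ∪ {a}) = ⊤) (x : Ghat) : Commute a x := by
  have hx : x ∈ Subgroup.closure ((G : Set Ghat) ∪ {a}) := hgen ▸ Subgroup.mem_top x
  induction hx using Subgroup.closure_induction with
  | mem y hy =>
    rcases hy with hy | hy
    · exact hcomm y hy
    · rw [Set.mem_singleton_iff] at hy; subst hy; rfl
  | one => exact Commute.one_right a
  | mul y z _ _ hy hz => exact hy.mul_right hz
  | inv y _ hy => exact hy.inv_right

lemma psiA_surjective (ha : ∀ x : Ghat, Commute a x)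
    (hgen : Subgroup.closure ((G : Set Ghat) ∪ {a}) = ⊤) :
    Function.Surjective (psiA a G ha) := by
  rw [← MonoidHom.range_eq_top]
  rw [← top_le_iff, ← hgen, Subgroup.closure_le]
  rintro x (hx | hx)
  · exact ⟨(⟨x, hx⟩, 1), by simp [psiA_apply]⟩
  · rw [show x = a from hx]
    refine ⟨(1, Multiplicative.ofAdd ((1 : ℤ) : ZMod (orderOf a))), ?_⟩
    rw [psiA_apply, phiA_zpow]
    simp

end

section
variable {Ghat : Type} [Group Ghat] [Finite Ghat] (a : Ghat) (G : Subgroup Ghat)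
open Subgroup

lemma card_fiber_hom {A B : Type*} [Group A] [Group B] (f : A →* B) (y : B)
    (hy : ∃ p, f p = y) : Nat.card {p // f p = y} = Nat.card (MonoidHom.ker f) := by
  obtain ⟨p₀, hp₀⟩ := hy
  refine Nat.card_congr ⟨fun p => ⟨p₀⁻¹ * p.1, ?_⟩, fun z => ⟨p₀ * z.1, ?_⟩, ?_, ?_⟩
  · simp [MonoidHom.mem_ker, p.2, hp₀]
  · have := z.2
    rw [MonoidHom.mem_ker] at this
    simp [this, hp₀]
  · intro p; ext; simp
  · intro z; ext; simp

lemma card_ker_psiA (ha : ∀ x : Ghat, Commute a x) (r : ℕ) (hr : 1 ≤ r)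
    (hdvd : r ∣ orderOf a) (hint : zpowers a ⊓ G = zpowers (a ^ r)) :
    Nat.card (MonoidHom.ker (psiA a G ha)) * r = orderOf a := by
  have key : Nat.card (MonoidHom.ker (psiA a G ha)) = Nat.card (zpowers (a ^ r)) := by
    refine Nat.card_eq_of_bijective
      (fun p => ⟨phiA a p.1.2, ?_⟩) ⟨?_, ?_⟩
    · have hker := p.2
      rw [MonoidHom.mem_ker, psiA_apply] at hker
      have h1 : phiA a p.1.2 = ((p.1.1 : Ghat))⁻¹ := by
        rw [eq_inv_iff_mul_eq_one]
        have hc : Commute ((p.1.1 : Ghat)) (phiA a p.1.2) := ((ha ((p.1.1 : Ghat))).symm.pow_right _)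
        rwa [hc.eq] at hker
      rw [← hint]
      exact ⟨phiA_mem_zpowers a _, h1 ▸ G.inv_mem p.1.1.2⟩
    · intro p q h
      have h2 : phiA a p.1.2 = phiA a q.1.2 := congrArg Subtype.val h
      have h3 : p.1.2 = q.1.2 := phiA_injective a h2
      have hp := p.2; have hq := q.2
      rw [MonoidHom.mem_ker, psiA_apply] at hp hq
      have h4 : (p.1.1 : Ghat) = (q.1.1 : Ghat) := by
        have := hp.trans hq.symm
        rw [h3] at this
        exact mul_right_cancel this
      ext
      · exact congrArg Subtype.val (Subtype.ext h4 : p.1.1 = q.1.1)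
      · exact congrArg Multiplicative.toAdd h3
    · rintro ⟨z, hz⟩
      have hzp : z ∈ zpowers a := (Subgroup.zpowers_le.mpr (pow_mem (mem_zpowers a) r)) hz
      have hzG : z ∈ G := (hint ▸ inf_le_right : zpowers (a ^ r) ≤ G) hz
      obtain ⟨k, hk⟩ := phiA_surj_zpowers a hzp
      refine ⟨⟨(⟨z⁻¹, G.inv_mem hzG⟩, k), ?_⟩, ?_⟩
      · rw [MonoidHom.mem_ker, psiA_apply, hk]
        simp
      · exact Subtype.ext hk
  rw [key, Nat.card_zpowers, orderOf_pow,
    Nat.gcd_eq_right hdvd, Nat.div_mul_cancel hdvd]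

lemma card_Ghat_mul (ha : ∀ x : Ghat, Commute a x)
    (hgen : Subgroup.closure ((G : Set Ghat) ∪ {a}) = ⊤) :
    Nat.card Ghat * Nat.card (MonoidHom.ker (psiA a G ha)) = Nat.card G * orderOf a := by
  have : NeZero (orderOf a) := ⟨(orderOf_pos a).ne'⟩
  have h1 := Subgroup.card_eq_card_quotient_mul_card_subgroup (MonoidHom.ker (psiA a G ha))
  have h2 : Nat.card ((G × Multiplicative (ZMod (orderOf a))) ⧸ MonoidHom.ker (psiA a G ha))
      = Nat.card Ghat :=
    Nat.card_congr (QuotientGroup.quotientKerEquivOfSurjective _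
      (psiA_surjective a G ha hgen)).toEquiv
  rw [h2] at h1
  rw [← h1, Nat.card_prod, Nat.card_congr (Multiplicative.toAdd (α := ZMod (orderOf a))), Nat.card_zmod]

end



open scoped Classical in
/-- The `d`-th order orbifold Euler characteristic `χ^{(d)}(X;G)`. -/
noncomputable def orbChi (d : ℕ) (G : Type*) [Group G] (X : Type*) [MulAction G X] : ℚ :=
  (Nat.card G : ℚ)⁻¹ *
    ∑ᶠ g : Fin (d + 1) → G,
      if ∀ i j, Commute (g i) (g j) then
        (Nat.card {x : X // ∀ i, g i • x = x} : ℚ) else 0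

/-- **Lemma 4-1.** If `Ghat = G·⟨a⟩` with `a` central, `⟨a⟩ ∩ G = ⟨a^r⟩`, and `a` acting trivially
on `X`, then `χ^{(d)}(X; G·⟨a⟩) = r^d · χ^{(d)}(X;G)`. -/
theorem orbChi_adjoin_central_element
    (Ghat : Type) [Group Ghat] [Finite Ghat] (X : Type) [Finite X] [MulAction Ghat X]
    (G : Subgroup Ghat) (a : Ghat)
    (hcomm : ∀ g ∈ G, a * g = g * a)
    (hgen : Subgroup.closure ((G : Set Ghat) ∪ {a}) = ⊤)
    (r : ℕ) (hr : 1 ≤ r) (hdvd : r ∣ orderOf a)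
    (hint : Subgroup.zpowers a ⊓ G = Subgroup.zpowers (a ^ r))
    (htriv : ∀ x : X, a • x = x) (d : ℕ) :
    orbChi d Ghat X = (r : ℚ) ^ d * orbChi d G X := by
  classical
  letI : Fintype Ghat := Fintype.ofFinite _
  letI : Fintype X := Fintype.ofFinite _
  have ha : ∀ x : Ghat, Commute a x := central_of_gen a G hcomm hgen
  set n := orderOf a with hn
  haveI : NeZero n := ⟨(orderOf_pos a).ne'⟩
  set M := Multiplicative (ZMod n) with hM
  set ψ := psiA a G ha with hψ
  set c := Nat.card (MonoidHom.ker ψ) with hc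
  set N := d + 1 with hN
  have hsurj : Function.Surjective ψ := psiA_surjective a G ha hgen
  have hcr : c * r = n := card_ker_psiA a G ha r hr hdvd hint
  have hGhat : Nat.card Ghat * c = Nat.card G * n := card_Ghat_mul a G ha hgen
  have hc0 : c ≠ 0 := Nat.card_pos.ne'
  have hr0 : (r : ℚ) ≠ 0 := by exact_mod_cast Nat.one_le_iff_ne_zero.mp hr
  have hpowtriv : ∀ (m : ℕ) (x : X), a ^ m • x = x := by
    intro m x
    induction m with
    | zero => simp
    | succ m ih => rw [pow_succ, mul_smul, htriv, ih]
  have hphitriv : ∀ (k : M) (x : X), phiA a k • x = x := fun k x => hpowtriv _ x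
  have hsmul : ∀ (p : G × M) (x : X), ψ p • x = (p.1 : Ghat) • x := by
    intro p x
    rw [hψ, psiA_apply, mul_smul, hphitriv]
  have hcommiff : ∀ p q : G × M, Commute (ψ p) (ψ q) ↔ Commute p.1 q.1 := by
    intro p q
    have hcp : ∀ x : Ghat, Commute (phiA a p.2) x := fun x => (ha x).pow_left _
    have hcq : ∀ x : Ghat, Commute (phiA a q.2) x := fun x => (ha x).pow_left _
    rw [hψ, psiA_apply, psiA_apply]
    constructor
    · intro h
      have h2 : Commute ((p.1 : Ghat)) ((q.1 : Ghat)) := by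
        have e1 := h.eq
        rw [(hcp ((q.1 : Ghat))).mul_mul_mul_comm, (hcq ((p.1 : Ghat))).mul_mul_mul_comm,
          (hcq (phiA a p.2)).eq] at e1
        exact mul_right_cancel e1
      exact Subtype.ext (by rw [Subgroup.coe_mul, Subgroup.coe_mul]; exact h2.eq)
    · intro h
      have h2 : Commute ((p.1 : Ghat)) ((q.1 : Ghat)) := by
        have := congrArg (Subtype.val) h.eq
        rwa [Subgroup.coe_mul, Subgroup.coe_mul] at this
      exact (h2.mul_right (hcq _).symm).mul_left (hcp _)
  -- integrand functions
  set Fhat : (Fin N → Ghat) → ℚ := fun gh =>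
    if ∀ i j, Commute (gh i) (gh j) then
      (Nat.card {x : X // ∀ i, gh i • x = x} : ℚ) else 0 with hFhat
  set FG : (Fin N → G) → ℚ := fun g =>
    if ∀ i j, Commute (g i) (g j) then
      (Nat.card {x : X // ∀ i, g i • x = x} : ℚ) else 0 with hFG
  have hpoint : ∀ p : Fin N → (G × M),
      Fhat (fun i => ψ (p i)) = FG (fun i => (p i).1) := by
    intro p
    rw [hFhat, hFG]
    refine if_congr ?_ ?_ rfl
    · exact forall_congr' fun i => forall_congr' fun j => hcommiff _ _
    · have hfix : Nat.card {x : X // ∀ i, ψ (p i) • x = x}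
          = Nat.card {x : X // ∀ i, (p i).1 • x = x} := by
        refine Nat.card_congr (Equiv.subtypeEquivRight fun x => ?_)
        exact forall_congr' fun i => by rw [hsmul, Subgroup.smul_def]
      exact_mod_cast congrArg (Nat.cast : ℕ → ℚ) hfix
  -- fiber cardinality
  have fibercard : ∀ gh : Fin N → Ghat,
      Nat.card {p : Fin N → G × M // (fun i => ψ (p i)) = gh} = c ^ N := by
    intro gh
    have e1 : {p : Fin N → G × M // (fun i => ψ (p i)) = gh} ≃ ∀ i, {q : G × M // ψ q = gh i} :=
      (Equiv.subtypeEquivRight fun p => funext_iff).trans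
        (Equiv.subtypePiEquivPi (p := fun (i : Fin N) (q : G × M) => ψ q = gh i))
    rw [Nat.card_congr e1, Nat.card_pi]
    have h2 : ∀ i : Fin N, Nat.card {q : G × M // ψ q = gh i} = c := fun i =>
      card_fiber_hom ψ (gh i) (hsurj (gh i))
    rw [Finset.prod_congr rfl fun i _ => h2 i, Finset.prod_const, Finset.card_univ,
      Fintype.card_fin]
  -- sum identity 1
  have hA1 : (∑ p : Fin N → G × M, Fhat (fun i => ψ (p i)))
      = (c : ℚ) ^ N * ∑ gh : Fin N → Ghat, Fhat gh := by
    rw [← Fintype.sum_fiberwise (fun p : Fin N → G × M => (fun i => ψ (p i)))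
      (fun p => Fhat (fun i => ψ (p i)))]
    rw [Finset.mul_sum]
    refine Finset.sum_congr rfl fun gh _ => ?_
    have : ∀ p : {p : Fin N → G × M // (fun i => ψ (p i)) = gh},
        Fhat (fun i => ψ (p.1 i)) = Fhat gh := fun p => by rw [p.2]
    rw [Finset.sum_congr rfl fun p _ => this p, Finset.sum_const, Finset.card_univ,
      ← Nat.card_eq_fintype_card, fibercard gh, nsmul_eq_mul]
    push_cast
    ring
  -- sum identity 2
  have hA2 : (∑ p : Fin N → G × M, FG (fun i => (p i).1))
      = (n : ℚ) ^ N * ∑ g : Fin N → G, FG g := by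
    rw [← Equiv.sum_comp (Equiv.arrowProdEquivProdArrow (Fin N) (fun _ => G) (fun _ => M)).symm
      (fun p : Fin N → G × M => FG (fun i => (p i).1))]
    have : ∀ q : (Fin N → G) × (Fin N → M),
        FG (fun i => (((Equiv.arrowProdEquivProdArrow (Fin N) (fun _ => G) (fun _ => M)).symm q) i).1) = FG q.1 := by
      intro q; rfl
    rw [Fintype.sum_prod_type]
    simp only [this]
    rw [Finset.mul_sum]
    refine Finset.sum_congr rfl fun u _ => ?_
    rw [Finset.sum_const, Finset.card_univ, nsmul_eq_mul]
    congr 1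
    have hcM : Fintype.card M = n := by
      rw [← Nat.card_eq_fintype_card, Nat.card_congr (Multiplicative.toAdd (α := ZMod n)),
        Nat.card_zmod]
    rw [Fintype.card_fun, hcM, Fintype.card_fin]
    push_cast
    ring
  have hkey : (c : ℚ) ^ N * ∑ gh : Fin N → Ghat, Fhat gh
      = (n : ℚ) ^ N * ∑ g : Fin N → G, FG g := by
    rw [← hA1, ← hA2]
    exact Finset.sum_congr rfl fun p _ => hpoint p
  -- unfold orbChi
  have horb1 : orbChi d Ghat X = (Nat.card Ghat : ℚ)⁻¹ * ∑ gh : Fin N → Ghat, Fhat gh := by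
    rw [orbChi, finsum_eq_sum_of_fintype]
  have horb2 : orbChi d G X = (Nat.card G : ℚ)⁻¹ * ∑ g : Fin N → G, FG g := by
    rw [orbChi, finsum_eq_sum_of_fintype]
  have hG0 : (Nat.card G : ℚ) ≠ 0 := by
    exact_mod_cast Nat.card_pos.ne'
  have hc0' : (c : ℚ) ≠ 0 := by exact_mod_cast hc0
  have hcrQ : (c : ℚ) * r = n := by exact_mod_cast hcr
  have hGhatQ : (Nat.card Ghat : ℚ) * c = Nat.card G * n := by exact_mod_cast hGhat
  have hGhatcard : (Nat.card Ghat : ℚ) = Nat.card G * r := by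
    have h1 : (Nat.card Ghat : ℚ) * c = (Nat.card G * r) * c := by
      rw [hGhatQ, ← hcrQ]; ring
    exact mul_right_cancel₀ hc0' h1
  have hShat : (∑ gh : Fin N → Ghat, Fhat gh) = (r : ℚ) ^ N * ∑ g : Fin N → G, FG g := by
    have h1 : (c : ℚ) ^ N * ∑ gh : Fin N → Ghat, Fhat gh
        = (c : ℚ) ^ N * ((r : ℚ) ^ N * ∑ g : Fin N → G, FG g) := by
      rw [hkey, ← hcrQ]
      ring
    exact mul_left_cancel₀ (pow_ne_zero _ hc0') h1
  have hpow : (r : ℚ) ^ N = (r : ℚ) ^ d * r := by rw [hN, pow_succ]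
  rw [horb1, horb2, hShat, hGhatcard, hpow]
  field_simp
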